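/- For probability measures μ₁, μ₂, μ₃ on a finite metric space (X,d) with diameter D and p ≥ 1: W_p^p(μ₁,μ₂) − W_p^p(μ₁,μ₃) ≤ p·D^{p−1}·W₁(μ₂,μ₃). -/
import Mathlib

open Finset Pointwise

def couplings {X : Type*} [Fintype X] (r s : X → ℝ) : Set (X → X → ℝ) :=
  {w | (∀ x x', 0 ≤ w x x') ∧ (∀ x, ∑ x', w x x' = r x) ∧ (∀ x', ∑ x, w x x' = s x')}

noncomputable def Wpp {X : Type*} [Fintype X] (d : X → X → ℝ) (p : ℝ) (r s : X → ℝ) : ℝ :=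
  sInf ((fun w => ∑ x, ∑ x', d x x' ^ p * w x x') '' couplings r s)

/-- Lipschitz bound for `x ^ p` on `[0, D]`. -/
lemma rpow_sub_rpow_le_aux {p D a b : ℝ} (hp : 1 ≤ p) (hb : 0 ≤ b) (hba : b ≤ a) (haD : a ≤ D) :
    a ^ p - b ^ p ≤ p * D ^ (p - 1) * (a - b) := by
  have ha : 0 ≤ a := hb.trans hba
  have hD : 0 ≤ D := ha.trans haD
  have key := Convex.norm_image_sub_le_of_norm_hasDerivWithin_le
    (f := fun x : ℝ => x ^ p) (f' := fun x : ℝ => p * x ^ (p - 1)) (s := Set.Icc 0 D)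
    (C := p * D ^ (p - 1))
    (fun x _ => (Real.hasDerivAt_rpow_const (Or.inr hp)).hasDerivWithinAt)
    (fun x hx => by
      rw [Real.norm_eq_abs, abs_of_nonneg (mul_nonneg (by linarith) (Real.rpow_nonneg hx.1 _))]
      exact mul_le_mul_of_nonneg_left
        (Real.rpow_le_rpow hx.1 hx.2 (by linarith)) (by linarith))
    (convex_Icc 0 D) ⟨hb, hba.trans haD⟩ ⟨ha, haD⟩
  have h1 : a ^ p - b ^ p ≤ ‖a ^ p - b ^ p‖ := le_abs_self _
  have h2 : ‖a - b‖ = a - b := abs_of_nonneg (by linarith)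
  calc a ^ p - b ^ p ≤ ‖a ^ p - b ^ p‖ := h1
    _ ≤ p * D ^ (p - 1) * ‖a - b‖ := key
    _ = p * D ^ (p - 1) * (a - b) := by rw [h2]

lemma couplings_nonempty_aux {X : Type*} [Fintype X] {r s : X → ℝ}
    (hr0 : ∀ x, 0 ≤ r x) (hs0 : ∀ x, 0 ≤ s x) (hr1 : ∑ x, r x = 1) (hs1 : ∑ x, s x = 1) :
    (couplings r s).Nonempty := by
  refine ⟨fun x y => r x * s y, fun x y => mul_nonneg (hr0 x) (hs0 y), fun x => ?_, fun y => ?_⟩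
  · rw [← Finset.mul_sum, hs1, mul_one]
  · rw [← Finset.sum_mul, hr1, one_mul]

lemma cost_bddBelow_aux {X : Type*} [Fintype X] [MetricSpace X] {r s : X → ℝ} {p : ℝ} :
    BddBelow ((fun w => ∑ x, ∑ x', dist x x' ^ p * w x x') '' couplings r s) := by
  refine ⟨0, fun v hv => ?_⟩
  obtain ⟨w, hw, rfl⟩ := hv
  exact Finset.sum_nonneg fun x _ => Finset.sum_nonneg fun y _ =>
    mul_nonneg (Real.rpow_nonneg dist_nonneg _) (hw.1 x y)

/-- For probability measures `μ₁, μ₂, μ₃` on a finite metric space with diameter `D` and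
`p ≥ 1`: `W_p^p(μ₁,μ₂) − W_p^p(μ₁,μ₃) ≤ p · D^(p−1) · W₁(μ₂,μ₃)`. -/
theorem Wpp_diff_le_W1 {X : Type*} [Fintype X] [MetricSpace X]
    (p : ℝ) (hp : 1 ≤ p) (μ₁ μ₂ μ₃ : X → ℝ)
    (h10 : ∀ x, 0 ≤ μ₁ x) (h11 : ∑ x, μ₁ x = 1)
    (h20 : ∀ x, 0 ≤ μ₂ x) (h21 : ∑ x, μ₂ x = 1)
    (h30 : ∀ x, 0 ≤ μ₃ x) (h31 : ∑ x, μ₃ x = 1)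
    (D : ℝ) (hD : D = Metric.diam (Set.univ : Set X)) :
    Wpp (fun x x' => dist x x') p μ₁ μ₂ - Wpp (fun x x' => dist x x') p μ₁ μ₃ ≤
      p * D ^ (p - 1) * Wpp (fun x x' => dist x x') 1 μ₂ μ₃ := by
  set c : ℝ := p * D ^ (p - 1) with hc
  have hD0 : 0 ≤ D := hD ▸ Metric.diam_nonneg
  have hc0 : 0 ≤ c := mul_nonneg (by linarith) (Real.rpow_nonneg hD0 _)
  have hdistD : ∀ x y : X, dist x y ≤ D := fun x y => hD ▸
    Metric.dist_le_diam_of_mem (Set.finite_univ.isBounded) (Set.mem_univ x) (Set.mem_univ y)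
  -- pointwise inequality
  have hpt : ∀ x y z : X, dist x y ^ p ≤ dist x z ^ p + c * dist y z := by
    intro x y z
    rcases le_or_gt (dist x y) (dist x z) with h | h
    · have := Real.rpow_le_rpow dist_nonneg h (by linarith : (0:ℝ) ≤ p)
      nlinarith [mul_nonneg hc0 (dist_nonneg (x := y) (y := z))]
    · have key := rpow_sub_rpow_le_aux (p := p) (D := D) hp dist_nonneg h.le (hdistD x y)
      have htri : dist x y - dist x z ≤ dist y z := by
        have := dist_triangle x z y
        rw [dist_comm z y] at this; linarith
      nlinarith [mul_le_mul_of_nonneg_left htri hc0]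
  -- key lemma: gluing
  have key : ∀ w₁₃ ∈ couplings μ₁ μ₃, ∀ w₂₃ ∈ couplings μ₂ μ₃,
      Wpp (fun x x' => dist x x') p μ₁ μ₂ ≤
        (∑ x, ∑ z, dist x z ^ p * w₁₃ x z) + c * ∑ y, ∑ z, dist y z ^ (1:ℝ) * w₂₃ y z := by
    intro w₁₃ hw₁₃ w₂₃ hw₂₃
    obtain ⟨h13n, h13r, h13c⟩ := hw₁₃
    obtain ⟨h23n, h23r, h23c⟩ := hw₂₃
    set g : X → ℝ := fun z => if μ₃ z = 0 then 0 else (μ₃ z)⁻¹ with hg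
    have hg0 : ∀ z, 0 ≤ g z := by
      intro z; by_cases h : μ₃ z = 0 <;> simp [hg, h, inv_nonneg, h30 z]
    have h13z : ∀ z, μ₃ z = 0 → ∀ x, w₁₃ x z = 0 := by
      intro z hz x
      have := (Finset.sum_eq_zero_iff_of_nonneg (fun i _ => h13n i z)).1 ((h13c z).trans hz)
      exact this x (Finset.mem_univ x)
    have h23z : ∀ z, μ₃ z = 0 → ∀ y, w₂₃ y z = 0 := by
      intro z hz y
      have := (Finset.sum_eq_zero_iff_of_nonneg (fun i _ => h23n i z)).1 ((h23c z).trans hz)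
      exact this y (Finset.mem_univ y)
    have hgμ13 : ∀ x z, w₁₃ x z * (g z * μ₃ z) = w₁₃ x z := by
      intro x z; by_cases h : μ₃ z = 0
      · simp [h13z z h, h]
      · rw [hg]; simp only [if_neg h]; rw [inv_mul_cancel₀ h, mul_one]
    have hgμ23 : ∀ y z, w₂₃ y z * (g z * μ₃ z) = w₂₃ y z := by
      intro y z; by_cases h : μ₃ z = 0
      · simp [h23z z h, h]
      · rw [hg]; simp only [if_neg h]; rw [inv_mul_cancel₀ h, mul_one]
    set w₁₂ : X → X → ℝ := fun x y => ∑ z, w₁₃ x z * (w₂₃ y z * g z) with hw12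
    have hmem : w₁₂ ∈ couplings μ₁ μ₂ := by
      refine ⟨fun x y => Finset.sum_nonneg fun z _ =>
        mul_nonneg (h13n x z) (mul_nonneg (h23n y z) (hg0 z)), fun x => ?_, fun y => ?_⟩
      · rw [Finset.sum_comm]
        calc ∑ z, ∑ y, w₁₃ x z * (w₂₃ y z * g z)
            = ∑ z, w₁₃ x z * (g z * ∑ y, w₂₃ y z) := by
              refine Finset.sum_congr rfl fun z _ => ?_
              rw [Finset.mul_sum, Finset.mul_sum]
              exact Finset.sum_congr rfl fun y _ => by ring
          _ = ∑ z, w₁₃ x z := by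
              refine Finset.sum_congr rfl fun z _ => ?_
              rw [h23c z]; exact hgμ13 x z
          _ = μ₁ x := h13r x
      · calc ∑ x, ∑ z, w₁₃ x z * (w₂₃ y z * g z)
            = ∑ z, w₂₃ y z * (g z * ∑ x, w₁₃ x z) := by
              rw [Finset.sum_comm]
              refine Finset.sum_congr rfl fun z _ => ?_
              simp only [Finset.mul_sum]
              exact Finset.sum_congr rfl fun x _ => by ring
          _ = ∑ z, w₂₃ y z := by
              refine Finset.sum_congr rfl fun z _ => ?_
              rw [h13c z]; exact hgμ23 y z
          _ = μ₂ y := h23r y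
    have hle : Wpp (fun x x' => dist x x') p μ₁ μ₂ ≤ ∑ x, ∑ y, dist x y ^ p * w₁₂ x y :=
      csInf_le cost_bddBelow_aux ⟨w₁₂, hmem, rfl⟩
    refine hle.trans ?_
    -- bound the cost of the glued coupling
    calc ∑ x, ∑ y, dist x y ^ p * w₁₂ x y
        ≤ ∑ x, ∑ y, ∑ z, (dist x z ^ p + c * dist y z) * (w₁₃ x z * (w₂₃ y z * g z)) := by
          refine Finset.sum_le_sum fun x _ => Finset.sum_le_sum fun y _ => ?_
          rw [hw12, Finset.mul_sum]
          refine Finset.sum_le_sum fun z _ => ?_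
          exact mul_le_mul_of_nonneg_right (hpt x y z)
            (mul_nonneg (h13n x z) (mul_nonneg (h23n y z) (hg0 z)))
      _ = (∑ x, ∑ y, ∑ z, dist x z ^ p * (w₁₃ x z * (w₂₃ y z * g z)))
          + ∑ x, ∑ y, ∑ z, c * dist y z * (w₁₃ x z * (w₂₃ y z * g z)) := by
          rw [← Finset.sum_add_distrib]
          refine Finset.sum_congr rfl fun x _ => ?_
          rw [← Finset.sum_add_distrib]
          refine Finset.sum_congr rfl fun y _ => ?_
          rw [← Finset.sum_add_distrib]
          exact Finset.sum_congr rfl fun z _ => by ring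
      _ = (∑ x, ∑ z, dist x z ^ p * w₁₃ x z) + c * ∑ y, ∑ z, dist y z ^ (1:ℝ) * w₂₃ y z := by
          congr 1
          · refine Finset.sum_congr rfl fun x _ => ?_
            rw [Finset.sum_comm]
            refine Finset.sum_congr rfl fun z _ => ?_
            calc ∑ y, dist x z ^ p * (w₁₃ x z * (w₂₃ y z * g z))
                = dist x z ^ p * (w₁₃ x z * (g z * ∑ y, w₂₃ y z)) := by
                  rw [Finset.mul_sum, Finset.mul_sum, Finset.mul_sum]
                  exact Finset.sum_congr rfl fun y _ => by ring
              _ = dist x z ^ p * w₁₃ x z := by rw [h23c z, hgμ13 x z]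
          · rw [Finset.mul_sum, Finset.sum_comm]
            refine Finset.sum_congr rfl fun y _ => ?_
            rw [Finset.mul_sum, Finset.sum_comm]
            refine Finset.sum_congr rfl fun z _ => ?_
            calc ∑ x, c * dist y z * (w₁₃ x z * (w₂₃ y z * g z))
                = c * dist y z * (w₂₃ y z * (g z * ∑ x, w₁₃ x z)) := by
                  simp only [Finset.mul_sum]
                  exact Finset.sum_congr rfl fun x _ => by ring
              _ = c * (dist y z ^ (1:ℝ) * w₂₃ y z) := by
                  rw [h13c z, hgμ23 y z, Real.rpow_one]; ring
  -- final assembly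
  have hW1eq : c * Wpp (fun x x' => dist x x') 1 μ₂ μ₃ =
      sInf (c • ((fun w => ∑ x, ∑ x', dist x x' ^ (1:ℝ) * w x x') '' couplings μ₂ μ₃)) := by
    rw [Wpp, Real.sInf_smul_of_nonneg hc0, smul_eq_mul]
  rw [hW1eq]
  apply le_csInf
  · exact (((couplings_nonempty_aux h20 h30 h21 h31).image _).smul_set)
  · rintro b ⟨b', ⟨w₂₃, hw₂₃, rfl⟩, rfl⟩
    have h3 : Wpp (fun x x' => dist x x') p μ₁ μ₂
        - c * (∑ y, ∑ z, dist y z ^ (1:ℝ) * w₂₃ y z) ≤ Wpp (fun x x' => dist x x') p μ₁ μ₃ := by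
      conv_rhs => rw [Wpp]
      apply le_csInf ((couplings_nonempty_aux h10 h30 h11 h31).image _)
      rintro b ⟨w₁₃, hw₁₃, rfl⟩
      simp only
      linarith [key w₁₃ hw₁₃ w₂₃ hw₂₃]
    simp only [smul_eq_mul]
    linarith
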